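/- Let Q be a polynomial and λ, m real numbers with λ = m(m−2). Suppose h : [ξ₁, ξ₂] → ℝ is continuously differentiable, satisfies (Q(ξ) h'(ξ))' = m(m−2) ξ h(ξ) on [ξ₁, ξ₂], and Q(ξ₁) = Q(ξ₂) = 0. If Q(ξ) < 0 and ξ > 0 for all ξ ∈ (ξ₁, ξ₂), and h is not identically zero, then m(m−2) > 0 or h' ≡ 0 with m(m−2) = 0. -/

import Mathlib

open intervalIntegral MeasureTheory Set Filter Topology

/-- A continuous nonnegative function on `[a,b]` with zero integral vanishes on `(a,b)`. -/
lemma aux_zero_of_integral_zero {f : ℝ → ℝ} {a b : ℝ} (hab : a < b)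
    (hc : ContinuousOn f (Set.Icc a b)) (hnn : ∀ x ∈ Set.Icc a b, 0 ≤ f x)
    (hz : ∫ x in a..b, f x = 0) : ∀ x ∈ Set.Ioo a b, f x = 0 := by
  intro x₀ hx₀
  by_contra hne
  have hpos : 0 < f x₀ := lt_of_le_of_ne (hnn x₀ (Set.Ioo_subset_Icc_self hx₀)) (Ne.symm hne)
  have hct : ContinuousAt f x₀ := hc.continuousAt (Icc_mem_nhds hx₀.1 hx₀.2)
  have hev : ∀ᶠ y in 𝓝 x₀, f x₀ / 2 < f y :=
    hct.eventually (eventually_gt_nhds (half_lt_self hpos))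
  have hev2 : ∀ᶠ y in 𝓝 x₀, f x₀ / 2 < f y ∧ y ∈ Set.Ioo a b :=
    hev.and (isOpen_Ioo.mem_nhds hx₀)
  obtain ⟨ε, hε, hball⟩ := Metric.eventually_nhds_iff.mp hev2
  set u := x₀ - ε / 2 with hu
  set v := x₀ + ε / 2 with hv
  have huv : u < v := by simp only [hu, hv]; linarith
  have hsub : ∀ y ∈ Set.Icc u v, f x₀ / 2 < f y ∧ y ∈ Set.Ioo a b := by
    intro y hy
    apply hball
    rw [Real.dist_eq, abs_lt]
    constructor
    · simp only [hu] at hy; linarith [hy.1]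
    · simp only [hv] at hy; linarith [hy.2]
  have hau : a ≤ u := ((hsub u ⟨le_refl u, huv.le⟩).2.1).le
  have hvb : v ≤ b := ((hsub v ⟨huv.le, le_refl v⟩).2.2).le
  have hi1 : IntervalIntegrable f volume a u :=
    (hc.mono (Set.Icc_subset_Icc le_rfl (huv.le.trans hvb))).intervalIntegrable_of_Icc hau
  have hi2 : IntervalIntegrable f volume u v :=
    (hc.mono (Set.Icc_subset_Icc hau hvb)).intervalIntegrable_of_Icc huv.le
  have hi3 : IntervalIntegrable f volume v b :=
    (hc.mono (Set.Icc_subset_Icc (hau.trans huv.le) le_rfl)).intervalIntegrable_of_Icc hvb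
  have hn1 : 0 ≤ ∫ x in a..u, f x :=
    intervalIntegral.integral_nonneg hau (fun x hx => hnn x ⟨hx.1, hx.2.trans (huv.le.trans hvb)⟩)
  have hn3 : 0 ≤ ∫ x in v..b, f x :=
    intervalIntegral.integral_nonneg hvb (fun x hx => hnn x ⟨(hau.trans huv.le).trans hx.1, hx.2⟩)
  have hp2 : 0 < ∫ x in u..v, f x := by
    apply intervalIntegral.intervalIntegral_pos_of_pos_on hi2 _ huv
    intro x hx
    exact lt_trans (half_pos hpos) (hsub x (Set.Ioo_subset_Icc_self hx)).1
  have hsplit : (∫ x in a..u, f x) + (∫ x in u..v, f x) + (∫ x in v..b, f x) = ∫ x in a..b, f x := by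
    rw [intervalIntegral.integral_add_adjacent_intervals hi1 hi2,
        intervalIntegral.integral_add_adjacent_intervals (hi1.trans hi2) hi3]
  rw [hz] at hsplit
  linarith

/-- A continuous function on `[a,b]` vanishing on `(a,b)` vanishes on `[a,b]`. -/
lemma aux_zero_closure {f : ℝ → ℝ} {a b : ℝ} (hab : a < b)
    (hc : ContinuousOn f (Set.Icc a b)) (hz : ∀ x ∈ Set.Ioo a b, f x = 0) :
    ∀ x ∈ Set.Icc a b, f x = 0 := by
  intro x hx
  rcases eq_or_lt_of_le hx.1 with h1 | h1
  · -- x = a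
    subst h1
    have hne : (𝓝[Set.Ioo a b] a).NeBot := by
      rw [← mem_closure_iff_nhdsWithin_neBot, closure_Ioo hab.ne]
      exact ⟨le_refl a, hab.le⟩
    have ht1 : Tendsto f (𝓝[Set.Ioo a b] a) (𝓝 (f a)) :=
      ((hc a hx).mono Set.Ioo_subset_Icc_self)
    have ht2 : Tendsto f (𝓝[Set.Ioo a b] a) (𝓝 0) := by
      apply Tendsto.congr' _ tendsto_const_nhds
      filter_upwards [self_mem_nhdsWithin] with y hy
      exact (hz y hy).symm
    exact tendsto_nhds_unique ht1 ht2
  rcases eq_or_lt_of_le hx.2 with h2 | h2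
  · -- x = b
    subst h2
    have hne : (𝓝[Set.Ioo a x] x).NeBot := by
      rw [← mem_closure_iff_nhdsWithin_neBot, closure_Ioo hab.ne]
      exact ⟨hab.le, le_refl x⟩
    have ht1 : Tendsto f (𝓝[Set.Ioo a x] x) (𝓝 (f x)) :=
      ((hc x hx).mono Set.Ioo_subset_Icc_self)
    have ht2 : Tendsto f (𝓝[Set.Ioo a x] x) (𝓝 0) := by
      apply Tendsto.congr' _ tendsto_const_nhds
      filter_upwards [self_mem_nhdsWithin] with y hy
      exact (hz y hy).symm
    exact tendsto_nhds_unique ht1 ht2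
  · exact hz x ⟨h1, h2⟩

/-- Sturm–Liouville positivity: if h is C¹ on [ξ₁, ξ₂] and solves
(Q h')' = m(m−2) ξ h with Q vanishing at the endpoints, Q < 0 and ξ > 0 inside,
and h not identically zero, then m(m−2) > 0, or h' ≡ 0 and m(m−2) = 0. -/
theorem stmt_9 (Q : Polynomial ℝ) (m ξ₁ ξ₂ : ℝ) (hlt : ξ₁ < ξ₂)
    (h h' : ℝ → ℝ)
    (hderiv : ∀ ξ ∈ Set.Icc ξ₁ ξ₂, HasDerivAt h (h' ξ) ξ)
    (hcont : ContinuousOn h' (Set.Icc ξ₁ ξ₂))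
    (heq : ∀ ξ ∈ Set.Icc ξ₁ ξ₂,
      HasDerivAt (fun x => Q.eval x * h' x) (m * (m - 2) * ξ * h ξ) ξ)
    (hQ1 : Q.eval ξ₁ = 0) (hQ2 : Q.eval ξ₂ = 0)
    (hQneg : ∀ ξ ∈ Set.Ioo ξ₁ ξ₂, Q.eval ξ < 0 ∧ 0 < ξ)
    (hnontriv : ¬ ∀ ξ ∈ Set.Icc ξ₁ ξ₂, h ξ = 0) :
    m * (m - 2) > 0 ∨
      ((∀ ξ ∈ Set.Icc ξ₁ ξ₂, h' ξ = 0) ∧ m * (m - 2) = 0) := by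
  set μ := m * (m - 2) with hμ
  -- continuity facts
  have hch : ContinuousOn h (Set.Icc ξ₁ ξ₂) :=
    fun x hx => (hderiv x hx).continuousAt.continuousWithinAt
  have hck : ContinuousOn (fun x => x * h x ^ 2) (Set.Icc ξ₁ ξ₂) :=
    continuousOn_id.mul (hch.pow 2)
  have hcg : ContinuousOn (fun x => -Q.eval x * h' x ^ 2) (Set.Icc ξ₁ ξ₂) :=
    (Q.continuous_aeval.neg.continuousOn).mul (hcont.pow 2)
  have huIcc : Set.uIcc ξ₁ ξ₂ = Set.Icc ξ₁ ξ₂ := Set.uIcc_of_le hlt.le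
  -- ξ₁ ≥ 0
  have hξ₁ : 0 ≤ ξ₁ := by
    by_contra hneg
    push_neg at hneg
    have h1 : ξ₁ < min 0 ξ₂ := lt_min hneg hlt
    have ht : (ξ₁ + min 0 ξ₂) / 2 ∈ Set.Ioo ξ₁ ξ₂ :=
      ⟨by linarith, by have := min_le_right (0:ℝ) ξ₂; linarith⟩
    have := (hQneg _ ht).2
    have := min_le_left (0:ℝ) ξ₂
    linarith
  -- nonnegativity
  have hknn : ∀ x ∈ Set.Icc ξ₁ ξ₂, 0 ≤ x * h x ^ 2 :=
    fun x hx => mul_nonneg (hξ₁.trans hx.1) (sq_nonneg _)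
  have hgnn : ∀ x ∈ Set.Icc ξ₁ ξ₂, 0 ≤ -Q.eval x * h' x ^ 2 := by
    intro x hx
    rcases eq_or_lt_of_le hx.1 with rfl | h1
    · simp [hQ1]
    rcases eq_or_lt_of_le hx.2 with rfl | h2
    · simp [hQ2]
    exact mul_nonneg (by linarith [(hQneg x ⟨h1, h2⟩).1]) (sq_nonneg _)
  -- integrability
  have hik : IntervalIntegrable (fun x => x * h x ^ 2) MeasureTheory.volume ξ₁ ξ₂ :=
    hck.intervalIntegrable_of_Icc hlt.le
  have hig : IntervalIntegrable (fun x => -Q.eval x * h' x ^ 2) MeasureTheory.volume ξ₁ ξ₂ :=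
    hcg.intervalIntegrable_of_Icc hlt.le
  -- the fundamental identity
  have hF : ∀ ξ ∈ Set.uIcc ξ₁ ξ₂,
      HasDerivAt (fun x => Q.eval x * h' x * h x)
        (μ * (ξ * h ξ ^ 2) - -Q.eval ξ * h' ξ ^ 2) ξ := by
    intro ξ hξ
    rw [huIcc] at hξ
    have := (heq ξ hξ).fun_mul (hderiv ξ hξ)
    refine this.congr_deriv ?_
    ring
  have hintF : IntervalIntegrable
      (fun ξ => μ * (ξ * h ξ ^ 2) - -Q.eval ξ * h' ξ ^ 2) MeasureTheory.volume ξ₁ ξ₂ :=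
    ((hik.const_mul μ).sub hig)
  have hkey : (∫ ξ in ξ₁..ξ₂, (μ * (ξ * h ξ ^ 2) - -Q.eval ξ * h' ξ ^ 2)) = 0 := by
    rw [intervalIntegral.integral_eq_sub_of_hasDerivAt hF hintF]
    simp [hQ1, hQ2]
  have hsplit : μ * (∫ ξ in ξ₁..ξ₂, ξ * h ξ ^ 2) = ∫ ξ in ξ₁..ξ₂, -Q.eval ξ * h' ξ ^ 2 := by
    rw [intervalIntegral.integral_sub (hik.const_mul μ) hig,
        intervalIntegral.integral_const_mul] at hkey
    linarith
  have hIknn : 0 ≤ ∫ ξ in ξ₁..ξ₂, ξ * h ξ ^ 2 :=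
    intervalIntegral.integral_nonneg hlt.le hknn
  have hIgnn : 0 ≤ ∫ ξ in ξ₁..ξ₂, -Q.eval ξ * h' ξ ^ 2 :=
    intervalIntegral.integral_nonneg hlt.le hgnn
  rcases lt_trichotomy μ 0 with hμ0 | hμ0 | hμ0
  · -- μ < 0 : contradiction with nontriviality
    exfalso
    have hIk0 : (∫ ξ in ξ₁..ξ₂, ξ * h ξ ^ 2) = 0 := by
      by_contra hne
      have : 0 < ∫ ξ in ξ₁..ξ₂, ξ * h ξ ^ 2 := lt_of_le_of_ne hIknn (Ne.symm hne)
      nlinarith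
    have hzero := aux_zero_of_integral_zero hlt hck hknn hIk0
    apply hnontriv
    apply aux_zero_closure hlt hch
    intro x hx
    have hx0 := (hQneg x hx).2
    have := hzero x hx
    have : h x ^ 2 = 0 := by
      rcases mul_eq_zero.mp this with h0 | h0
      · exact absurd h0 (ne_of_gt hx0)
      · exact h0
    exact pow_eq_zero_iff two_ne_zero |>.mp this
  · -- μ = 0 : h' ≡ 0
    right
    refine ⟨?_, hμ0⟩
    have hIg0 : (∫ ξ in ξ₁..ξ₂, -Q.eval ξ * h' ξ ^ 2) = 0 := by
      rw [← hsplit, hμ0, zero_mul]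
    have hzero := aux_zero_of_integral_zero hlt hcg hgnn hIg0
    apply aux_zero_closure hlt hcont
    intro x hx
    have hQx := (hQneg x hx).1
    have := hzero x hx
    have : h' x ^ 2 = 0 := by
      rcases mul_eq_zero.mp this with h0 | h0
      · exact absurd h0 (by simp; linarith)
      · exact h0
    exact pow_eq_zero_iff two_ne_zero |>.mp this
  · exact Or.inl hμ0
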